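/- Let Y be a convex subset of a locally convex topological vector space over ℝ. For every convex neighborhood U of 0 there exists a neighborhood W of 0 such that for every subset A ⊆ Y, every n, every t ∈ Δₙ, and all tuples (x₀,…,xₙ) with xᵢ ∈ A + W ∩ Y, the convex combination Σ tᵢ xᵢ lies in (convexHull A) + U. -/

import Mathlib

open Pointwise

/-- Condition (E) for locally convex spaces: the convex combination operation
is uniformly continuous with respect to the points. -/
theorem convex_combination_uniformly_continuous
    {E : Type*} [AddCommGroup E] [Module ℝ E] [TopologicalSpace E]
    [IsTopologicalAddGroup E] [ContinuousSMul ℝ E] [LocallyConvexSpace ℝ E]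
    (Y : Set E) (hY : Convex ℝ Y)
    (U : Set E) (hU : U ∈ nhds (0 : E)) (hUconv : Convex ℝ U) :
    ∃ W ∈ nhds (0 : E), ∀ (A : Set E), A ⊆ Y →
      ∀ (n : ℕ) (t : Fin (n + 1) → ℝ), t ∈ stdSimplex ℝ (Fin (n + 1)) →
      ∀ x : Fin (n + 1) → E, (∀ i, x i ∈ (A + W) ∩ Y) →
      (∑ i, t i • x i) ∈ (convexHull ℝ A) + U := by
  refine ⟨U, hU, fun A hA n t ht x hx => ?_⟩
  -- decompose each x i as a i + w i
  have hdec : ∀ i, ∃ a ∈ A, ∃ w ∈ U, x i = a + w := by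
    intro i
    obtain ⟨a, ha, w, hw, h⟩ := (hx i).1
    exact ⟨a, ha, w, hw, h.symm⟩
  choose a ha w hw hxw using hdec
  have : (∑ i, t i • x i) = (∑ i, t i • a i) + (∑ i, t i • w i) := by
    rw [← Finset.sum_add_distrib]
    exact Finset.sum_congr rfl fun i _ => by rw [hxw i, smul_add]
  rw [this]
  refine Set.add_mem_add ?_ ?_
  · exact (convex_convexHull ℝ A).sum_mem (fun i _ => ht.1 i) ht.2
      (fun i _ => subset_convexHull ℝ A (ha i))
  · exact hUconv.sum_mem (fun i _ => ht.1 i) ht.2 (fun i _ => hw i)
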